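/- For every Z2×Z2-flow f on a graph G, there exists a Z2×Z2-flow g on G with supp(g) = supp(f) such that the edge set E_{g=(0,1)}(G) contains no circuit of G and the edge set E_{g=(1,0)}(G) contains no circuit of G. -/
import Mathlib


/-- A finite multigraph: loops and multiple edges are allowed.  Each edge is
assigned its (unordered) pair of endpoints. -/
structure Multigraph where
  V : Type
  E : Type
  finV : Finite V
  finE : Finite E
  ends : E → Sym2 V

attribute [instance] Multigraph.finV Multigraph.finE

namespace Multigraph

/-- A walk of length `n`: a sequence of `n+1` vertices and `n` edges, each edge
joining consecutive vertices. -/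
structure Walk (G : Multigraph) (n : ℕ) where
  vtx : Fin (n + 1) → G.V
  edge : Fin n → G.E
  compat : ∀ i : Fin n, G.ends (edge i) = s(vtx i.castSucc, vtx i.succ)

variable (G : Multigraph)

/-- The degree of a vertex (a loop counts twice). -/
noncomputable def degree (v : G.V) : ℕ :=
  Nat.card {e : G.E // v ∈ G.ends e ∧ ¬ (G.ends e).IsDiag} +
    2 * Nat.card {e : G.E // G.ends e = s(v, v)}

/-- The degree of a vertex in the subgraph with edge set `S` (a loop counts twice). -/
noncomputable def degIn (S : Set G.E) (v : G.V) : ℕ :=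
  Nat.card {e : G.E // e ∈ S ∧ v ∈ G.ends e ∧ ¬ (G.ends e).IsDiag} +
    2 * Nat.card {e : G.E // e ∈ S ∧ G.ends e = s(v, v)}

/-- A cycle (identified with its edge set): every vertex has even degree. -/
def IsCycle (S : Set G.E) : Prop := ∀ v : G.V, Even (G.degIn S v)

/-- `u` is joined to `w` by a path using only edges in `S`. -/
def Reaches (S : Set G.E) (u w : G.V) : Prop :=
  Relation.ReflTransGen (fun a b => ∃ e ∈ S, G.ends e = s(a, b)) u w

/-- A circuit (identified with its edge set): a connected `2`-regular subgraph. -/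
def IsCircuit (S : Set G.E) : Prop :=
  S.Nonempty ∧
    (∀ v : G.V, (∃ e ∈ S, v ∈ G.ends e) → G.degIn S v = 2) ∧
    ∀ u w : G.V, (∃ e ∈ S, u ∈ G.ends e) → (∃ e ∈ S, w ∈ G.ends e) → G.Reaches S u w

/-- A `ℤ₂×ℤ₂`-flow: at every vertex the values on the incident edges sum to zero
(a loop contributes its value twice, hence zero). -/
def IsFlow (f : G.E → ZMod 2 × ZMod 2) : Prop :=
  ∀ v : G.V, ∑ᶠ e ∈ {e : G.E | v ∈ G.ends e ∧ ¬ (G.ends e).IsDiag}, f e = 0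

/-- The support of a flow. -/
def supp (f : G.E → ZMod 2 × ZMod 2) : Set G.E := {e | f e ≠ 0}

/-- Contraction of the edge set `C`: delete the edges of `C` and identify the
ends of each edge of `C`. -/
def contract (C : Set G.E) : Multigraph where
  V := Quot fun u w : G.V => ∃ e ∈ C, G.ends e = s(u, w)
  E := {e : G.E // e ∉ C}
  finV := Finite.of_surjective _ (Quot.mk_surjective)
  finE := inferInstance
  ends := fun e => (G.ends e.1).map (Quot.mk _)

/-- A path: all vertices distinct (hence all edges distinct, which we also require). -/
def Walk.IsPath {n : ℕ} (W : G.Walk n) : Prop :=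
  Function.Injective W.vtx ∧ Function.Injective W.edge

/-- A nontrivial path all of whose internal vertices have degree `2` in `G`. -/
def IsDeg2Path {n : ℕ} (W : G.Walk n) : Prop :=
  1 ≤ n ∧ W.IsPath G ∧ ∀ i : Fin (n + 1), 0 < i.val → i.val < n → G.degree (W.vtx i) = 2

/-- A thread of `G`: a maximal path all of whose internal vertices have degree `2`
in `G` (maximal: its edge set is not properly contained in the edge set of
another such path). -/
def IsThread {n : ℕ} (W : G.Walk n) : Prop :=
  G.IsDeg2Path W ∧ ∀ (m : ℕ) (Q : G.Walk m), G.IsDeg2Path Q →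
    Set.range W.edge ⊆ Set.range Q.edge → Set.range Q.edge = Set.range W.edge

/-- A cycle cover: a (multi)collection of cycles covering every edge. -/
def IsCycleCover (𝒞 : Multiset (Set G.E)) : Prop :=
  (∀ S ∈ 𝒞, G.IsCycle S) ∧ ∀ e : G.E, ∃ S ∈ 𝒞, e ∈ S

/-- The length of a cycle cover: the sum of the lengths of its cycles. -/
noncomputable def coverLength (𝒞 : Multiset (Set G.E)) : ℕ :=
  (𝒞.map Set.ncard).sum

/-- The minimum length of a cycle cover of `G`. -/
noncomputable def cc : ℕ :=
  sInf {L : ℕ | ∃ 𝒞 : Multiset (Set G.E), G.IsCycleCover 𝒞 ∧ G.coverLength 𝒞 = L}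

/-- `G` is bridgeless: the ends of each edge `e` are still joined after deleting `e`. -/
def Bridgeless : Prop :=
  ∀ (e : G.E) (u w : G.V), G.ends e = s(u, w) → G.Reaches {e}ᶜ u w

/-- The connected component of the subgraph with edge set `S` containing the edge `e₀`. -/
def component (S : Set G.E) (e₀ : G.E) : Set G.E :=
  {e ∈ S | ∃ u w : G.V, u ∈ G.ends e₀ ∧ w ∈ G.ends e ∧ G.Reaches S u w}

/-- `B` is a connected component of the subgraph with edge set `S`. -/
def IsComponent (S B : Set G.E) : Prop := ∃ e₀ ∈ S, B = G.component S e₀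

/-- A `k`-flow: an orientation `D` (given by the tail/head pair of each edge)
together with an integer-valued function `f` with `|f e| < k`, conserved at
every vertex. -/
def IsIntFlow (k : ℕ) (D : G.E → G.V × G.V) (f : G.E → ℤ) : Prop :=
  (∀ e : G.E, s((D e).1, (D e).2) = G.ends e) ∧
    (∀ e : G.E, |f e| < (k : ℤ)) ∧
    ∀ v : G.V, (∑ᶠ e ∈ {e : G.E | (D e).1 = v}, f e) =
      ∑ᶠ e ∈ {e : G.E | (D e).2 = v}, f e

end Multigraph

section Aux

open Multigraph

lemma MGaux_add_self (x : ZMod 2 × ZMod 2) : x + x = 0 := by revert x; decide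

lemma MGaux_even_smul {n : ℕ} (hn : Even n) (x : ZMod 2 × ZMod 2) : n • x = 0 := by
  obtain ⟨k, rfl⟩ := hn
  rw [add_nsmul]
  exact MGaux_add_self _

lemma MGaux_isFlow_add (G : Multigraph) {g h : G.E → ZMod 2 × ZMod 2}
    (hg : G.IsFlow g) (hh : G.IsFlow h) : G.IsFlow (fun e => g e + h e) := by
  intro v
  rw [finsum_mem_add_distrib (Set.toFinite _), hg v, hh v, add_zero]

lemma MGaux_circuit_even (G : Multigraph) {S : Set G.E} (hS : G.IsCircuit S) (v : G.V) :
    Even (Nat.card {e : G.E // e ∈ S ∧ v ∈ G.ends e ∧ ¬ (G.ends e).IsDiag}) := by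
  by_cases hv : ∃ e ∈ S, v ∈ G.ends e
  · have h2 := hS.2.1 v hv
    unfold Multigraph.degIn at h2
    rw [Nat.even_iff]
    omega
  · have hemp : IsEmpty {e : G.E // e ∈ S ∧ v ∈ G.ends e ∧ ¬ (G.ends e).IsDiag} :=
      ⟨fun e => hv ⟨e.1, e.2.1, e.2.2.1⟩⟩
    simp [Nat.card_of_isEmpty]

lemma MGaux_isFlow_indicator (G : Multigraph) {S : Set G.E} [DecidablePred (· ∈ S)]
    (hS : G.IsCircuit S) (a : ZMod 2 × ZMod 2) :
    G.IsFlow (fun e => if e ∈ S then a else 0) := by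
  classical
  have : Fintype G.E := Fintype.ofFinite G.E
  intro v
  have hT : ({e : G.E | v ∈ G.ends e ∧ ¬ (G.ends e).IsDiag}).Finite := Set.toFinite _
  rw [← hT.coe_toFinset, finsum_mem_coe_finset]
  rw [← Finset.sum_filter]
  rw [Finset.sum_const]
  apply MGaux_even_smul
  have hcard : (hT.toFinset.filter (· ∈ S)).card =
      Nat.card {e : G.E // e ∈ S ∧ v ∈ G.ends e ∧ ¬ (G.ends e).IsDiag} := by
    rw [Nat.card_eq_fintype_card, Fintype.card_subtype]
    congr 1
    ext e
    simp only [Finset.mem_filter, Set.Finite.mem_toFinset, Set.mem_setOf_eq, Finset.mem_univ, true_and]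
    tauto
  rw [hcard]
  exact MGaux_circuit_even G hS v

end Aux

open Multigraph in
/-- For every `ℤ₂×ℤ₂`-flow `f` on `G` there is a `ℤ₂×ℤ₂`-flow
`g` on `G` with `supp g = supp f` such that neither `E_{g=(0,1)}(G)` nor
`E_{g=(1,0)}(G)` contains a circuit of `G`. -/
theorem exists_flow_acyclic_classes (G : Multigraph)
    (f : G.E → ZMod 2 × ZMod 2) (hf : G.IsFlow f) :
    ∃ g : G.E → ZMod 2 × ZMod 2, G.IsFlow g ∧ G.supp g = G.supp f ∧
      (¬ ∃ S : Set G.E, G.IsCircuit S ∧ S ⊆ {e : G.E | g e = (0, 1)}) ∧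
      (¬ ∃ S : Set G.E, G.IsCircuit S ∧ S ⊆ {e : G.E | g e = (1, 0)}) := by
  classical
  have : Fintype G.E := Fintype.ofFinite G.E
  set N : (G.E → ZMod 2 × ZMod 2) → ℕ := fun g =>
    (Finset.univ.filter (fun e => g e = ((0 : ZMod 2), (1 : ZMod 2)) ∨
      g e = ((1 : ZMod 2), (0 : ZMod 2)))).card with hN
  set T : Set ℕ := {n | ∃ g : G.E → ZMod 2 × ZMod 2,
    (G.IsFlow g ∧ G.supp g = G.supp f) ∧ N g = n} with hT
  have hne : T.Nonempty := ⟨N f, f, ⟨hf, rfl⟩, rfl⟩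
  obtain ⟨g, ⟨hgflow, hgsupp⟩, hgN⟩ := Nat.sInf_mem hne
  -- the key step, done once for each class
  have key : ∀ c : ZMod 2 × ZMod 2,
      (c = ((0 : ZMod 2), (1 : ZMod 2)) ∨ c = ((1 : ZMod 2), (0 : ZMod 2))) →
      ¬ ∃ S : Set G.E, G.IsCircuit S ∧ S ⊆ {e : G.E | g e = c} := by
    rintro c hc ⟨S, hcirc, hsub⟩
    have hc0 : c ≠ 0 := by rcases hc with h | h <;> subst h <;> decide
    set g' : G.E → ZMod 2 × ZMod 2 :=
      fun e => g e + (if e ∈ S then ((1, 1) + c) else 0) with hg'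
    have hg'flow : G.IsFlow g' :=
      MGaux_isFlow_add G hgflow (MGaux_isFlow_indicator G hcirc _)
    have hval : ∀ e ∈ S, g' e = (1, 1) := by
      intro e he
      have : g e = c := hsub he
      simp only [hg', if_pos he, this]
      rw [add_comm ((1 : ZMod 2), (1 : ZMod 2)) c, ← add_assoc, MGaux_add_self, zero_add]
    have hout : ∀ e ∉ S, g' e = g e := by
      intro e he
      simp [hg', if_neg he]
    have h11 : ((1 : ZMod 2), (1 : ZMod 2)) ≠ ((0 : ZMod 2), (1 : ZMod 2)) ∧
        ((1 : ZMod 2), (1 : ZMod 2)) ≠ ((1 : ZMod 2), (0 : ZMod 2)) ∧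
        ((1 : ZMod 2), (1 : ZMod 2)) ≠ 0 := by decide
    have hsupp' : G.supp g' = G.supp f := by
      rw [← hgsupp]
      ext e
      by_cases he : e ∈ S
      · simp only [Multigraph.supp, Set.mem_setOf_eq, hval e he]
        have : g e = c := hsub he
        simp [this, hc0, h11.2.2]
      · simp [Multigraph.supp, hout e he]
    rcases hc with hc01 | hc10
    · -- c = (0,1)
      have hlt : N g' < N g := by
        apply Finset.card_lt_card
        constructor
        · intro e he
          simp only [Finset.mem_filter, Finset.mem_univ, true_and] at he ⊢
          by_cases heS : e ∈ S
          · rw [hval e heS] at he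
            rcases he with he | he
            exacts [absurd he h11.1, absurd he h11.2.1]
          · rwa [hout e heS] at he
        · intro hss
          obtain ⟨e₀, he₀⟩ := hcirc.1
          have h1 : e₀ ∈ Finset.univ.filter (fun e => g e = ((0 : ZMod 2), (1 : ZMod 2)) ∨
              g e = ((1 : ZMod 2), (0 : ZMod 2))) := by
            simp only [Finset.mem_filter, Finset.mem_univ, true_and]
            exact Or.inl (hc01 ▸ hsub he₀)
          have h2 := hss h1
          simp only [Finset.mem_filter, Finset.mem_univ, true_and, hval e₀ he₀] at h2
          rcases h2 with h2 | h2
          exacts [h11.1 h2, h11.2.1 h2]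
      have := Nat.sInf_le (show N g' ∈ T from ⟨g', ⟨hg'flow, hsupp'⟩, rfl⟩)
      omega
    · -- c = (1,0)
      have hlt : N g' < N g := by
        apply Finset.card_lt_card
        constructor
        · intro e he
          simp only [Finset.mem_filter, Finset.mem_univ, true_and] at he ⊢
          by_cases heS : e ∈ S
          · rw [hval e heS] at he
            rcases he with he | he
            exacts [absurd he h11.1, absurd he h11.2.1]
          · rwa [hout e heS] at he
        · intro hss
          obtain ⟨e₀, he₀⟩ := hcirc.1
          have h1 : e₀ ∈ Finset.univ.filter (fun e => g e = ((0 : ZMod 2), (1 : ZMod 2)) ∨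
              g e = ((1 : ZMod 2), (0 : ZMod 2))) := by
            simp only [Finset.mem_filter, Finset.mem_univ, true_and]
            exact Or.inr (hc10 ▸ hsub he₀)
          have h2 := hss h1
          simp only [Finset.mem_filter, Finset.mem_univ, true_and, hval e₀ he₀] at h2
          rcases h2 with h2 | h2
          exacts [h11.1 h2, h11.2.1 h2]
      have := Nat.sInf_le (show N g' ∈ T from ⟨g', ⟨hg'flow, hsupp'⟩, rfl⟩)
      omega
  exact ⟨g, hgflow, hgsupp, key (0, 1) (Or.inl rfl), key (1, 0) (Or.inr rfl)⟩
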